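/- On the complex torus ℂ𝕋ⁿ = ℂⁿ/(2π(ℤ+iℤ))ⁿ, let Φ(z) = 2 Σ_{p=1}^P c_p^{-1} φ^p χ_{a^p,b^p}(z) with χ_{a,b}(z) = (2π)^{-n} e^{i(⟨x,a⟩+⟨y,b⟩)}, φ^p ∈ ℂᵐ, (a^p,b^p) ∈ ℤⁿ×ℤⁿ pairwise distinct, c_p ∈ ℕ₊. Then ρ_Φ = Σ_{p=1}^P conj(φ^p ⊗ ψ^p) ⊙ (φ^p ⊗ ψ^p), where ψ^p = (a^p + i b^p)/c_p. In particular ρ_Φ is separable. -/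

import Mathlib

open MeasureTheory Complex Finset Real
open scoped ComplexConjugate

/-- A fundamental domain for the complex torus `ℂ𝕋ⁿ = ℂⁿ/(2π(ℤ+iℤ))ⁿ`,
realized inside `ℂⁿ = Fin n → ℂ`. -/
def torusCube (n : ℕ) : Set (Fin n → ℂ) :=
  {z | ∀ j, (z j).re ∈ Set.Ico (0 : ℝ) (2 * π) ∧ (z j).im ∈ Set.Ico (0 : ℝ) (2 * π)}

/-- The character `χ_{a,b}(z) = (2π)^{-n} e^{i(⟨x,a⟩+⟨y,b⟩)}` on the torus. -/
noncomputable def torusChar {n : ℕ} (a b : Fin n → ℤ) (z : Fin n → ℂ) : ℂ :=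
  (((2 * π : ℝ) ^ n)⁻¹ : ℝ) *
    Complex.exp (I * ∑ j, ((z j).re * (a j : ℝ) + (z j).im * (b j : ℝ)))

noncomputable def Sq : Set ℂ := {w | w.re ∈ Set.Ico (0:ℝ) (2*π) ∧ w.im ∈ Set.Ico (0:ℝ) (2*π)}

lemma Sq_pre : Sq = Complex.measurableEquivRealProd ⁻¹'
    (Set.Ico (0:ℝ) (2*π) ×ˢ Set.Ico (0:ℝ) (2*π)) := by
  ext w; simp [Sq, Complex.measurableEquivRealProd, Set.mem_prod]

lemma Sq_meas : MeasurableSet Sq := by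
  rw [Sq_pre]
  exact Complex.measurableEquivRealProd.measurable (measurableSet_Ico.prod measurableSet_Ico)

lemma Sq_vol : volume Sq = ENNReal.ofReal (2*π) * ENNReal.ofReal (2*π) := by
  rw [Sq_pre, Complex.volume_preserving_equiv_real_prod.measure_preimage
    ((measurableSet_Ico.prod measurableSet_Ico)).nullMeasurableSet]
  rw [Measure.volume_eq_prod, Measure.prod_prod]
  simp [Real.volume_Ico]

lemma cube_pi (n : ℕ) : torusCube n = Set.univ.pi (fun _ : Fin n => Sq) := by
  ext z; simp [torusCube, Sq, Set.mem_pi]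

lemma cube_meas (n : ℕ) : MeasurableSet (torusCube n) := by
  rw [cube_pi]; exact MeasurableSet.univ_pi fun _ => Sq_meas

lemma cube_vol_lt (n : ℕ) : volume (torusCube n) < ⊤ := by
  rw [cube_pi, volume_pi_pi]
  simp only [Sq_vol]
  exact ENNReal.prod_lt_top fun _ _ => (ENNReal.mul_lt_top ENNReal.ofReal_lt_top
    ENNReal.ofReal_lt_top)

lemma int1d (k : ℤ) : (∫ x in Set.Ico (0:ℝ) (2*π), Complex.exp (I * (x * k))) =
    if k = 0 then ((2*π : ℝ) : ℂ) else 0 := by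
  rw [MeasureTheory.Measure.restrict_congr_set MeasureTheory.Ico_ae_eq_Ioc,
    ← intervalIntegral.integral_of_le (by positivity : (0:ℝ) ≤ 2*π)]
  by_cases hk : k = 0
  · simp [hk, two_pi_pos.le]
  · simp only [hk, if_false]
    have hne : (I * k : ℂ) ≠ 0 := by
      simp [Complex.ext_iff, I_ne_zero, Int.cast_injective.ne_iff, hk]
    have : ∀ x : ℝ, Complex.exp (I * (x * k)) = Complex.exp ((I * k) * x) := by
      intro x; ring_nf
    simp_rw [this]
    rw [integral_exp_mul_complex hne]
    have h1 : Complex.exp (I * k * (2*π)) = 1 := by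
      rw [show (I * k * (2*π) : ℂ) = k * (2 * π * I) by ring]
      exact Complex.exp_int_mul_two_pi_mul_I k
    simp [h1]

lemma intSq (α β : ℤ) : (∫ w in Sq, Complex.exp (I * (w.re * α + w.im * β))) =
    (if α = 0 then ((2*π:ℝ):ℂ) else 0) * (if β = 0 then ((2*π:ℝ):ℂ) else 0) := by
  have key : ∀ w : ℂ, Complex.exp (I * (w.re * α + w.im * β)) =
      Complex.exp (I * ((Complex.measurableEquivRealProd w).1 * α)) *
        Complex.exp (I * ((Complex.measurableEquivRealProd w).2 * β)) := by
    intro w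
    have e1 : (Complex.measurableEquivRealProd w).1 = w.re := rfl
    have e2 : (Complex.measurableEquivRealProd w).2 = w.im := rfl
    rw [← Complex.exp_add, e1, e2]
    congr 1
    ring
  simp_rw [Sq_pre, key]
  have h2 := Complex.volume_preserving_equiv_real_prod.setIntegral_preimage_emb
    Complex.measurableEquivRealProd.measurableEmbedding
    (fun p : ℝ × ℝ => Complex.exp (I * (p.1 * α)) * Complex.exp (I * (p.2 * β)))
    (Set.Ico (0:ℝ) (2*π) ×ˢ Set.Ico (0:ℝ) (2*π))
  rw [h2, Measure.volume_eq_prod]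
  exact (setIntegral_prod_mul (fun x : ℝ => Complex.exp (I * (x * α)))
    (fun y : ℝ => Complex.exp (I * (y * β))) _ _).trans (by rw [int1d, int1d])

/-- Pi-Fubini over the cube. -/
lemma cube_prod_int (n : ℕ) (f : Fin n → ℂ → ℂ) :
    (∫ z in torusCube n, ∏ j, f j (z j)) = ∏ j, ∫ w in Sq, f j w := by
  rw [cube_pi, ← integral_indicator (MeasurableSet.univ_pi fun _ => Sq_meas)]
  have key : ∀ z : Fin n → ℂ, (Set.univ.pi (fun _ : Fin n => Sq)).indicator
      (fun z => ∏ j, f j (z j)) z = ∏ j, Sq.indicator (f j) (z j) := by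
    intro z
    by_cases hz : z ∈ Set.univ.pi (fun _ : Fin n => Sq)
    · rw [Set.indicator_of_mem hz]
      exact Finset.prod_congr rfl fun j _ =>
        (Set.indicator_of_mem (hz j (Set.mem_univ j)) _).symm
    · rw [Set.indicator_of_notMem hz]
      rw [Set.mem_pi] at hz
      push_neg at hz
      obtain ⟨j, _, hj⟩ := hz
      exact (Finset.prod_eq_zero (Finset.mem_univ j)
        (Set.indicator_of_notMem hj _)).symm
  simp_rw [key]
  rw [MeasureTheory.integral_fintype_prod_volume_eq_prod (fun j => Sq.indicator (f j))]
  exact Finset.prod_congr rfl fun j _ => integral_indicator Sq_meas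

lemma char_cont {n : ℕ} (a b : Fin n → ℤ) : Continuous (torusChar a b) := by
  unfold torusChar
  fun_prop

/-- Orthogonality of characters. -/
lemma char_orth {n : ℕ} (a b a' b' : Fin n → ℤ) :
    (∫ z in torusCube n, conj (torusChar a b z) * torusChar a' b' z) =
      if a = a' ∧ b = b' then 1 else 0 := by
  have hfun : ∀ z : Fin n → ℂ, conj (torusChar a b z) * torusChar a' b' z =
      ((((2 * π : ℝ) ^ n)⁻¹ : ℝ) : ℂ) * ((((2 * π : ℝ) ^ n)⁻¹ : ℝ) : ℂ) *
      ∏ j, Complex.exp (I * ((z j).re * ((a' j - a j : ℤ) : ℂ) +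
        (z j).im * ((b' j - b j : ℤ) : ℂ))) := by
    intro z
    unfold torusChar
    rw [map_mul, Complex.conj_ofReal, ← Complex.exp_conj, map_mul, Complex.conj_I,
      Complex.conj_ofReal, ← Complex.exp_sum]
    rw [mul_mul_mul_comm, ← Complex.exp_add]
    congr 1
    push_cast
    rw [Finset.mul_sum, Finset.mul_sum, ← Finset.sum_add_distrib]
    congr 1
    exact Finset.sum_congr rfl fun j _ => by ring
  simp_rw [hfun]
  rw [MeasureTheory.integral_const_mul, cube_prod_int n
    (fun j w => Complex.exp (I * (w.re * ((a' j - a j : ℤ) : ℂ) + w.im * ((b' j - b j : ℤ) : ℂ))))]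
  simp_rw [intSq]
  by_cases h : a = a' ∧ b = b'
  · obtain ⟨ha, hb⟩ := h
    subst ha; subst hb
    simp only [sub_self, if_pos rfl, and_self, if_pos (⟨rfl, rfl⟩ : a = a ∧ b = b)]
    rw [Finset.prod_const, Finset.card_univ, Fintype.card_fin]
    have h2π : ((2 * π : ℝ) : ℂ) ≠ 0 := Complex.ofReal_ne_zero.2 (by positivity)
    have hπ : (π : ℂ) ≠ 0 := Complex.ofReal_ne_zero.2 Real.pi_ne_zero
    push_cast
    field_simp
    rw [mul_pow]
    rw [← mul_pow, ← mul_pow]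
    exact pow_right_comm _ _ _
  · rw [if_neg h]
    have : ∃ j, a' j - a j ≠ 0 ∨ b' j - b j ≠ 0 := by
      by_contra hcon
      push_neg at hcon
      exact h ⟨funext fun j => by have := (hcon j).1; omega,
        funext fun j => by have := (hcon j).2; omega⟩
    obtain ⟨j, hj⟩ := this
    rw [Finset.prod_eq_zero (Finset.mem_univ j), mul_zero]
    rcases hj with hj | hj
    · rw [if_neg hj, zero_mul]
    · rw [if_neg hj, mul_zero]

lemma char_integrable {n : ℕ} (a b a' b' : Fin n → ℤ) :
    IntegrableOn (fun z => conj (torusChar a b z) * torusChar a' b' z)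
      (torusCube n) volume := by
  haveI : IsFiniteMeasure (volume.restrict (torusCube n)) := by
    constructor
    rw [Measure.restrict_apply_univ]
    exact cube_vol_lt n
  apply Integrable.mono' (g := fun _ => (((2 * π : ℝ) ^ n)⁻¹) * (((2 * π : ℝ) ^ n)⁻¹))
    (integrable_const _)
  · exact (Complex.continuous_conj.comp (char_cont a b)).mul (char_cont a' b')
      |>.aestronglyMeasurable
  · filter_upwards with z
    rw [norm_mul, RCLike.norm_conj]
    unfold torusChar
    rw [norm_mul, norm_mul, Complex.norm_real]
    have h1 : ∀ (s : ℝ), ‖Complex.exp (I * (s : ℂ))‖ = 1 := by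
      intro s
      rw [Complex.norm_exp]
      simp [Complex.exp_zero]
    simp only [h1, mul_one, Real.norm_eq_abs,
      _root_.abs_of_nonneg (show (0:ℝ) ≤ ((2 * π : ℝ) ^ n)⁻¹ by positivity), le_refl]

/-- for the trigonometric polynomial
`Φ(z) = 2 Σ_p c_p⁻¹ φ^p χ_{a^p,b^p}(z)` on the torus (with pairwise distinct
frequencies `(a^p,b^p)` and `c_p ∈ ℕ₊`), whose conjugate differential is
`∂̄_{z_j}Φ_i = Σ_p i c_p⁻¹ φ^p_i (a^p_j + i b^p_j) χ_{a^p,b^p}`, the form `ρ_Φ`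
equals `Σ_p conj(φ^p ⊗ ψ^p) ⊙ (φ^p ⊗ ψ^p)` with `ψ^p = (a^p + i b^p)/c_p`;
in particular `ρ_Φ` is separable. -/
theorem torus_rhoPhi_separable (n m P : ℕ) (φ : Fin P → Fin m → ℂ)
    (a b : Fin P → Fin n → ℤ) (c : Fin P → ℕ) (hc : ∀ p, 0 < c p)
    (hdist : Function.Injective (fun p => (a p, b p)))
    (D : (Fin n → ℂ) → Fin m → Fin n → ℂ)
    (hD : ∀ z i j, D z i j =
      ∑ p, I * ((c p : ℂ))⁻¹ * φ p i * ((a p j : ℂ) + I * (b p j : ℂ)) *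
        torusChar (a p) (b p) z)
    (ψ : Fin P → Fin n → ℂ)
    (hψ : ∀ p j, ψ p j = ((a p j : ℂ) + I * (b p j : ℂ)) / (c p : ℂ)) :
    ∀ i j k l, (∫ z in torusCube n, conj (D z i j) * D z k l) =
      ∑ p, conj (φ p i * ψ p j) * (φ p k * ψ p l) := by
  intro i j k l
  simp_rw [hD]
  set C : Fin P → ℂ := fun p => I * ((c p : ℂ))⁻¹ * φ p i * ((a p j : ℂ) + I * (b p j : ℂ))
    with hC
  set C' : Fin P → ℂ := fun p => I * ((c p : ℂ))⁻¹ * φ p k * ((a p l : ℂ) + I * (b p l : ℂ))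
    with hC'
  have expand : ∀ z : Fin n → ℂ,
      conj (∑ p, C p * torusChar (a p) (b p) z) * (∑ q, C' q * torusChar (a q) (b q) z)
      = ∑ p, ∑ q, (conj (C p) * C' q) *
          (conj (torusChar (a p) (b p) z) * torusChar (a q) (b q) z) := by
    intro z
    rw [map_sum, Finset.sum_mul_sum]
    exact Finset.sum_congr rfl fun p _ => Finset.sum_congr rfl fun q _ => by
      rw [map_mul]; ring
  simp_rw [show ∀ z : Fin n → ℂ, conj (∑ p, I * ((c p : ℂ))⁻¹ * φ p i * ((a p j : ℂ) + I * (b p j : ℂ)) * torusChar (a p) (b p) z) * (∑ q, I * ((c q : ℂ))⁻¹ * φ q k * ((a q l : ℂ) + I * (b q l : ℂ)) * torusChar (a q) (b q) z) = _ from expand]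
  rw [integral_finset_sum _ (fun p _ => integrable_finset_sum _
    (fun q _ => ((char_integrable (a p) (b p) (a q) (b q)).const_mul _)))]
  refine Finset.sum_congr rfl fun p _ => ?_
  rw [integral_finset_sum _ (fun q _ => ((char_integrable (a p) (b p) (a q) (b q)).const_mul _))]
  simp_rw [MeasureTheory.integral_const_mul, char_orth]
  rw [Finset.sum_eq_single p]
  · rw [if_pos ⟨rfl, rfl⟩, mul_one, hC, hC']
    simp only [hψ, map_mul, map_add, map_inv₀, Complex.conj_I, map_intCast, map_natCast,
      div_eq_mul_inv]
    have hI2 : (I:ℂ)^2 = -1 := Complex.I_sq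
    have hI3 : (I:ℂ)^3 = -I := by rw [pow_succ, hI2]; ring
    have hI4 : (I:ℂ)^4 = 1 := by rw [show (4:ℕ) = 2+2 from rfl, pow_add, hI2]; ring
    ring_nf
    simp only [hI2, hI3, hI4]
    ring
  · intro q _ hqp
    rw [if_neg, mul_zero]
    intro hcon
    exact hqp (hdist (Prod.ext hcon.1 hcon.2)).symm
  · intro hp
    exact absurd (Finset.mem_univ p) hp
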